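/- Let d ≥ 3 be an integer, let V : ℝ^d → [0,∞) be Hölder continuous with compact support and ∫_{ℝ^d} V(x) dx = 1, and let a > 0. If w₁ and w₂ are twice continuously differentiable functions on ℝ^d satisfying Δw_i(x) = a V(x)(1 + w_i(x)) for all x ∈ ℝ^d and w_i(x) → 0 as |x| → ∞, for i = 1,2, then w₁ = w₂. -/

import Mathlib

open MeasureTheory Filter

/-- The Laplacian of `f : ℝ^d → ℝ`, as the sum of the second partial derivatives. -/
noncomputable def lap {d : ℕ} (f : EuclideanSpace ℝ (Fin d) → ℝ)
    (x : EuclideanSpace ℝ (Fin d)) : ℝ :=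
  ∑ i : Fin d, fderiv ℝ (fun y => fderiv ℝ f y (EuclideanSpace.single i 1)) x
    (EuclideanSpace.single i 1)

section Aux

open Topology RealInnerProductSpace

variable {d : ℕ}

local notation "E" => EuclideanSpace ℝ (Fin d)

private lemma le_add_eps {a b : ℝ} (h : ∀ ε : ℝ, 0 < ε → a ≤ b + ε) : a ≤ b := by
  by_contra hc
  push_neg at hc
  have := h ((a - b)/2) (by linarith)
  linarith

lemma hasFDerivAt_fderiv_apply {f : E → ℝ} (hf : ContDiff ℝ 2 f) (v x : E) :
    HasFDerivAt (fun y => fderiv ℝ f y v)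
      ((ContinuousLinearMap.apply ℝ ℝ v).comp (fderiv ℝ (fderiv ℝ f) x)) x := by
  have h1 : ContDiff ℝ 1 (fderiv ℝ f) := hf.fderiv_right (by norm_num)
  have h2 : HasFDerivAt (fderiv ℝ f) (fderiv ℝ (fderiv ℝ f) x) x :=
    (h1.differentiable one_ne_zero x).hasFDerivAt
  exact (ContinuousLinearMap.apply ℝ ℝ v).hasFDerivAt.comp x h2

lemma secondDeriv_nonpos_of_isLocalMax {f : E → ℝ} (hf : ContDiff ℝ 2 f) {p : E}
    (hmax : IsLocalMax f p) (v : E) :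
    fderiv ℝ (fun y => fderiv ℝ f y v) p v ≤ 0 := by
  by_contra hA
  push_neg at hA
  set L : ℝ → E := fun t => p + t • v with hLdef
  have h0 : L 0 = p := by simp [hLdef]
  have hLd : ∀ t : ℝ, HasDerivAt L v t := fun t => by
    simpa [hLdef] using ((hasDerivAt_id t).smul_const v).const_add p
  set φ : ℝ → ℝ := fun t => f (L t) with hφdef
  set Φ : ℝ → ℝ := fun t => fderiv ℝ f (L t) v with hΦdef
  have hφd : ∀ t : ℝ, HasDerivAt φ (Φ t) t := fun t =>
    ((hf.differentiable two_ne_zero (L t)).hasFDerivAt).comp_hasDerivAt t (hLd t)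
  set A := fderiv ℝ (fun y => fderiv ℝ f y v) p v with hAdef
  have hF := hasFDerivAt_fderiv_apply hf v p
  have hAval : A = ((ContinuousLinearMap.apply ℝ ℝ v).comp (fderiv ℝ (fderiv ℝ f) p)) v := by
    rw [hAdef, hF.fderiv]
  have hF0 : HasFDerivAt (fun y => fderiv ℝ f y v)
      ((ContinuousLinearMap.apply ℝ ℝ v).comp (fderiv ℝ (fderiv ℝ f) p)) (L 0) := by
    rw [h0]; exact hF
  have hΦd : HasDerivAt Φ A 0 := by
    rw [hAval]; exact hF0.comp_hasDerivAt 0 (hLd 0)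
  have hmax0 : IsLocalMax φ 0 := by
    have hT : Tendsto L (𝓝 0) (𝓝 p) := by
      have := (hLd 0).continuousAt.tendsto
      rwa [h0] at this
    have := hT.eventually hmax
    simpa [IsLocalMax, IsMaxFilter, hφdef, h0] using this
  have hΦ0 : Φ 0 = 0 := by
    have := (hφd 0).deriv
    rw [hmax0.deriv_eq_zero] at this
    exact this.symm
  have hslope : Tendsto (slope Φ 0) (𝓝[≠] 0) (𝓝 A) := hasDerivAt_iff_tendsto_slope.mp hΦd
  have hev : ∀ᶠ t in 𝓝[>] (0:ℝ), 0 < slope Φ 0 t := by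
    have h1 : ∀ᶠ t in 𝓝[≠] (0:ℝ), 0 < slope Φ 0 t := hslope.eventually (eventually_gt_nhds hA)
    exact nhdsWithin_mono 0 (fun t ht => ne_of_gt ht) h1
  have hev2 : ∀ᶠ t in 𝓝[>] (0:ℝ), φ t ≤ φ 0 := by
    have hT : Tendsto L (𝓝[>] (0:ℝ)) (𝓝 p) := by
      have := (hLd 0).continuousAt.tendsto
      rw [h0] at this
      exact this.mono_left nhdsWithin_le_nhds
    have := hT.eventually hmax
    have hφ0 : φ 0 = f p := by rw [hφdef]; simp [h0]
    exact this.mono fun t ht => by rw [hφ0]; exact ht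
  obtain ⟨δ, hδ, hδsub⟩ := mem_nhdsGT_iff_exists_Ioo_subset.mp (hev.and hev2)
  have hδ0 : (0:ℝ) < δ := hδ
  set t₀ := δ / 2 with ht₀def
  have ht₀ : t₀ ∈ Set.Ioo (0:ℝ) δ := ⟨by positivity, by rw [ht₀def]; linarith⟩
  have hmono : StrictMonoOn φ (Set.Icc 0 t₀) := by
    apply strictMonoOn_of_deriv_pos (convex_Icc 0 t₀)
    · exact fun t _ => ((hφd t).differentiableAt.continuousAt).continuousWithinAt
    · intro t ht
      rw [interior_Icc] at ht
      have htδ : t ∈ Set.Ioo (0:ℝ) δ := ⟨ht.1, lt_trans ht.2 (by rw [ht₀def]; linarith)⟩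
      have := (hδsub htδ).1
      rw [(hφd t).deriv]
      have hΦt : Φ t = slope Φ 0 t * t := by
        rw [slope_def_field, hΦ0]
        field_simp [ht.1.ne']
        ring
      rw [hΦt]
      exact mul_pos this ht.1
  have h1 : φ 0 < φ t₀ := hmono (Set.left_mem_Icc.mpr (le_of_lt ht₀.1))
    (Set.right_mem_Icc.mpr (le_of_lt ht₀.1)) ht₀.1
  have h2 : φ t₀ ≤ φ 0 := (hδsub ht₀).2
  linarith

lemma lap_nonpos_of_isLocalMax {f : E → ℝ} (hf : ContDiff ℝ 2 f) {p : E}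
    (hmax : IsLocalMax f p) : lap f p ≤ 0 := by
  unfold lap
  exact Finset.sum_nonpos fun i _ => secondDeriv_nonpos_of_isLocalMax hf hmax _

lemma lap_sub {f g : E → ℝ} (hf : ContDiff ℝ 2 f) (hg : ContDiff ℝ 2 g) (x : E) :
    lap (fun y => f y - g y) x = lap f x - lap g x := by
  unfold lap
  rw [← Finset.sum_sub_distrib]
  apply Finset.sum_congr rfl
  intro i _
  set v := EuclideanSpace.single i (1:ℝ) with hv
  have heq : (fun y => fderiv ℝ (fun z => f z - g z) y v)
      = fun y => fderiv ℝ f y v - fderiv ℝ g y v := by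
    funext y
    rw [fderiv_fun_sub (hf.differentiable two_ne_zero y) (hg.differentiable two_ne_zero y)]
    simp
  rw [heq]
  have h1 := hasFDerivAt_fderiv_apply hf v x
  have h2 := hasFDerivAt_fderiv_apply hg v x
  rw [(h1.fun_sub h2).fderiv, h1.fderiv, h2.fderiv]
  simp

lemma lap_add {f g : E → ℝ} (hf : ContDiff ℝ 2 f) (hg : ContDiff ℝ 2 g) (x : E) :
    lap (fun y => f y + g y) x = lap f x + lap g x := by
  unfold lap
  rw [← Finset.sum_add_distrib]
  apply Finset.sum_congr rfl
  intro i _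
  set v := EuclideanSpace.single i (1:ℝ) with hv
  have heq : (fun y => fderiv ℝ (fun z => f z + g z) y v)
      = fun y => fderiv ℝ f y v + fderiv ℝ g y v := by
    funext y
    rw [fderiv_fun_add (hf.differentiable two_ne_zero y) (hg.differentiable two_ne_zero y)]
    simp
  rw [heq]
  have h1 := hasFDerivAt_fderiv_apply hf v x
  have h2 := hasFDerivAt_fderiv_apply hg v x
  rw [(h1.fun_add h2).fderiv, h1.fderiv, h2.fderiv]
  simp

lemma lap_mul_self {u : E → ℝ} (hu : ContDiff ℝ 2 u) (x : E) :
    lap (fun y => u y * u y) x =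
      2 * u x * lap u x + 2 * ∑ i : Fin d, (fderiv ℝ u x (EuclideanSpace.single i 1))^2 := by
  unfold lap
  rw [Finset.mul_sum, Finset.mul_sum, ← Finset.sum_add_distrib]
  apply Finset.sum_congr rfl
  intro i _
  set v := EuclideanSpace.single i (1:ℝ) with hv
  have hdu : ∀ y, DifferentiableAt ℝ u y := fun y => hu.differentiable two_ne_zero y
  have heq : (fun y => fderiv ℝ (fun z => u z * u z) y v)
      = fun y => u y * (fderiv ℝ u y v) + u y * (fderiv ℝ u y v) := by
    funext y
    rw [fderiv_fun_mul (hdu y) (hdu y)]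
    simp
  rw [heq]
  have hF := hasFDerivAt_fderiv_apply hu v x
  have hprod : HasFDerivAt (fun y => u y * (fderiv ℝ u y v))
      (u x • ((ContinuousLinearMap.apply ℝ ℝ v).comp (fderiv ℝ (fderiv ℝ u) x))
        + (fderiv ℝ u x v) • fderiv ℝ u x) x :=
    (hdu x).hasFDerivAt.mul hF
  rw [(hprod.fun_add hprod).fderiv, hF.fderiv]
  simp
  ring

lemma lap_const_mul_inner (c : ℝ) (x : E) :
    lap (fun y : E => c * ⟪y, y⟫) x = c * (2 * d) := by
  unfold lap
  have key : ∀ i : Fin d, fderiv ℝ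
      (fun y => fderiv ℝ (fun z : E => c * ⟪z, z⟫) y (EuclideanSpace.single i 1)) x
      (EuclideanSpace.single i 1) = 2 * c := by
    intro i
    set v := EuclideanSpace.single i (1:ℝ) with hv
    have hvnorm : ‖v‖ = 1 := by simp [hv, EuclideanSpace.norm_single]
    have heq : (fun y => fderiv ℝ (fun z : E => c * ⟪z, z⟫) y v)
        = fun y => ((2*c) • (innerSL ℝ v)) y := by
      funext y
      have hid : DifferentiableAt ℝ (fun z : E => z) y := differentiableAt_fun_id
      rw [fderiv_const_mul (hid.inner ℝ hid) c]
      rw [ContinuousLinearMap.smul_apply, fderiv_inner_apply ℝ hid hid]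
      simp only [fderiv_id', ContinuousLinearMap.coe_id', id_eq,
        ContinuousLinearMap.smul_apply, innerSL_apply_apply, smul_eq_mul]
      rw [real_inner_comm y v]
      ring
    rw [heq, ContinuousLinearMap.fderiv, ContinuousLinearMap.smul_apply, smul_eq_mul,
      innerSL_apply_apply, real_inner_self_eq_norm_sq, hvnorm]
    ring
  rw [Finset.sum_congr rfl (fun i _ => key i)]
  simp [Finset.sum_const, Finset.card_univ]
  ring

end Aux

open Topology RealInnerProductSpace in
theorem stmt11 (d : ℕ) (hd : 3 ≤ d) (V : EuclideanSpace ℝ (Fin d) → ℝ)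
    (hV0 : ∀ x, 0 ≤ V x) (hVhold : ∃ (C r : NNReal), 0 < r ∧ HolderWith C r V)
    (hVsupp : HasCompactSupport V) (hVint : ∫ x, V x = 1)
    (a : ℝ) (ha : 0 < a)
    (w₁ w₂ : EuclideanSpace ℝ (Fin d) → ℝ)
    (hw₁ : ContDiff ℝ 2 w₁) (hw₂ : ContDiff ℝ 2 w₂)
    (hweq₁ : ∀ x, lap w₁ x = a * V x * (1 + w₁ x))
    (hweq₂ : ∀ x, lap w₂ x = a * V x * (1 + w₂ x))
    (hwlim₁ : Tendsto w₁ (cocompact (EuclideanSpace ℝ (Fin d))) (nhds 0))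
    (hwlim₂ : Tendsto w₂ (cocompact (EuclideanSpace ℝ (Fin d))) (nhds 0)) :
    w₁ = w₂ := by
  classical
  have hu : ContDiff ℝ 2 (fun x => w₁ x - w₂ x) := hw₁.sub hw₂
  have hlapu : ∀ x, lap (fun y => w₁ y - w₂ y) x = a * V x * (w₁ x - w₂ x) := by
    intro x
    rw [lap_sub hw₁ hw₂, hweq₁, hweq₂]
    ring
  have hlapg : ∀ x, 0 ≤ lap (fun y => (w₁ y - w₂ y) * (w₁ y - w₂ y)) x := by
    intro x
    rw [lap_mul_self hu x, hlapu x]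
    have h1 : 0 ≤ 2 * (w₁ x - w₂ x) * (a * V x * (w₁ x - w₂ x)) := by
      have hVx := hV0 x
      nlinarith [mul_nonneg (mul_nonneg ha.le hVx) (sq_nonneg (w₁ x - w₂ x))]
    have h2 : 0 ≤ 2 * ∑ i : Fin d,
        (fderiv ℝ (fun y => w₁ y - w₂ y) x (EuclideanSpace.single i 1))^2 := by
      positivity
    linarith
  have hqC2 : ContDiff ℝ 2 (fun y : EuclideanSpace ℝ (Fin d) => ⟪y, y⟫) :=
    contDiff_id.inner ℝ contDiff_id
  have hulim : Tendsto (fun x => w₁ x - w₂ x)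
      (cocompact (EuclideanSpace ℝ (Fin d))) (𝓝 0) := by
    simpa using hwlim₁.sub hwlim₂
  have hglim : Tendsto (fun x => (w₁ x - w₂ x) * (w₁ x - w₂ x))
      (cocompact (EuclideanSpace ℝ (Fin d))) (𝓝 0) := by
    simpa using hulim.mul hulim
  have main : ∀ x₀, (w₁ x₀ - w₂ x₀) * (w₁ x₀ - w₂ x₀) ≤ 0 := by
    intro x₀
    apply le_add_eps
    intro ε hε
    rw [zero_add]
    -- choose R
    have hev : ∀ᶠ y in cocompact (EuclideanSpace ℝ (Fin d)),
        (w₁ y - w₂ y) * (w₁ y - w₂ y) < ε := hglim.eventually (eventually_lt_nhds hε)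
    obtain ⟨K, hK, hKsub⟩ := mem_cocompact.mp hev
    obtain ⟨R₀, hR₀⟩ := hK.isBounded.subset_closedBall 0
    set R := max R₀ ‖x₀‖ + 1 with hRdef
    have hx₀R : ‖x₀‖ < R := by
      have := le_max_right R₀ ‖x₀‖
      rw [hRdef]; linarith
    have hRpos : 0 < R := lt_of_le_of_lt (norm_nonneg x₀) hx₀R
    have houter : ∀ y : EuclideanSpace ℝ (Fin d), ‖y‖ = R →
        (w₁ y - w₂ y) * (w₁ y - w₂ y) < ε := by
      intro y hy
      apply hKsub
      intro hyK
      have h1 : ‖y‖ ≤ R₀ := mem_closedBall_zero_iff.mp (hR₀ hyK)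
      have h2 := le_max_left R₀ ‖x₀‖
      rw [hy, hRdef] at h1
      linarith
    have hδbound : ∀ δ : ℝ, 0 < δ →
        (w₁ x₀ - w₂ x₀) * (w₁ x₀ - w₂ x₀) ≤ ε + δ * R^2 := by
      intro δ hδ
      have hhC2 : ContDiff ℝ 2 (fun y : EuclideanSpace ℝ (Fin d) =>
          (w₁ y - w₂ y) * (w₁ y - w₂ y) + δ * ⟪y, y⟫) :=
        (hu.mul hu).add (contDiff_const.mul hqC2)
      obtain ⟨p, hpmem, hpmax⟩ := (isCompact_closedBall (0 : EuclideanSpace ℝ (Fin d)) R).exists_isMaxOn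
        ⟨0, Metric.mem_closedBall_self hRpos.le⟩ hhC2.continuous.continuousOn
      have hpR : ‖p‖ ≤ R := mem_closedBall_zero_iff.mp hpmem
      rcases lt_or_eq_of_le hpR with hlt | heqR
      · exfalso
        have hnhds : Metric.closedBall (0 : EuclideanSpace ℝ (Fin d)) R ∈ 𝓝 p :=
          mem_of_superset (Metric.isOpen_ball.mem_nhds (mem_ball_zero_iff.mpr hlt))
            Metric.ball_subset_closedBall
        have hloc : IsLocalMax (fun y : EuclideanSpace ℝ (Fin d) =>
            (w₁ y - w₂ y) * (w₁ y - w₂ y) + δ * ⟪y, y⟫) p := hpmax.isLocalMax hnhds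
        have h1 := lap_nonpos_of_isLocalMax hhC2 hloc
        rw [lap_add (hu.mul hu) (contDiff_const.mul hqC2) p, lap_const_mul_inner δ p] at h1
        have hd3 : (3:ℝ) ≤ (d:ℝ) := by exact_mod_cast hd
        have h2 := hlapg p
        nlinarith
      · have hx₀mem : x₀ ∈ Metric.closedBall (0 : EuclideanSpace ℝ (Fin d)) R :=
          mem_closedBall_zero_iff.mpr hx₀R.le
        have h1 : (w₁ x₀ - w₂ x₀) * (w₁ x₀ - w₂ x₀) + δ * ⟪x₀, x₀⟫
            ≤ (w₁ p - w₂ p) * (w₁ p - w₂ p) + δ * ⟪p, p⟫ := hpmax hx₀mem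
        have h2 : (w₁ p - w₂ p) * (w₁ p - w₂ p) < ε := houter p heqR
        have h3 : ⟪p, p⟫ = R^2 := by rw [real_inner_self_eq_norm_sq, heqR]
        have h4 : (0:ℝ) ≤ ⟪x₀, x₀⟫ := real_inner_self_nonneg
        rw [h3] at h1
        nlinarith [mul_nonneg hδ.le h4]
    apply le_add_eps
    intro ε' hε'
    have h := hδbound (ε' / R^2) (by positivity)
    have hR2 : (ε' / R^2) * R^2 = ε' := by field_simp
    rw [hR2] at h
    exact h
  funext x
  have h1 := main x
  have h2 := mul_self_nonneg (w₁ x - w₂ x)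
  have h3 : w₁ x - w₂ x = 0 := by nlinarith
  linarith
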